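/- arXiv:1902.10342 — 2 statements merged into one kernel-verified Lean document; each statement's English description precedes it below -/
import Mathlib

section
/- Let h be a Hamiltonian cycle of a graph on N vertices, oriented, with starting vertex k. For any two distinct vertices i, j both different from k, the sum of the positions of i and of j on h is at least 2·min(d(k,i), d(k,j)) + d(i,j), where d denotes graph distance. -/
lemma exists_walk_getVert {V : Type*} {G : SimpleGraph V} {u v : V} (p : G.Walk u v)
    (a : ℕ) : ∀ b, a ≤ b → b ≤ p.length →
    ∃ q : G.Walk (p.getVert a) (p.getVert b), q.length = b - a := by
  intro b hab hbl
  induction b, hab using Nat.le_induction with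
  | base => exact ⟨SimpleGraph.Walk.nil, by simp⟩
  | succ b hab ih =>
    obtain ⟨q, hq⟩ := ih (by omega)
    exact ⟨q.concat (p.adj_getVert_succ (by omega)), by simp [hq]; omega⟩

lemma dist_getVert_le {V : Type*} {G : SimpleGraph V} {u v : V} (p : G.Walk u v)
    {a b : ℕ} (hab : a ≤ b) (hbl : b ≤ p.length) :
    G.dist (p.getVert a) (p.getVert b) ≤ b - a := by
  obtain ⟨q, hq⟩ := exists_walk_getVert p a b hab hbl
  calc G.dist (p.getVert a) (p.getVert b) ≤ q.length := SimpleGraph.dist_le q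
  _ = b - a := hq

theorem position_sum_ge_dist_bound
    {V : Type*} [Fintype V] [DecidableEq V]
    (G : SimpleGraph V) (k : V) (h : G.Walk k k) (hh : h.IsHamiltonianCycle)
    (i j : V) (hik : i ≠ k) (hjk : j ≠ k) (hij : i ≠ j)
    (ri rj : ℕ) (hri : ri ≤ Fintype.card V - 1) (hrj : rj ≤ Fintype.card V - 1)
    (hi : h.getVert ri = i) (hj : h.getVert rj = j) :
    2 * min (G.dist k i) (G.dist k j) + G.dist i j ≤ ri + rj := by
  have hlen : h.length = Fintype.card V := hh.length_eq
  have : Nonempty V := ⟨k⟩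
  have hcard : 1 ≤ Fintype.card V := Fintype.card_pos
  have hri' : ri ≤ h.length := by omega
  have hrj' : rj ≤ h.length := by omega
  have hki : G.dist k i ≤ ri := by
    have := dist_getVert_le h (Nat.zero_le ri) hri'
    simpa [hi] using this
  have hkj : G.dist k j ≤ rj := by
    have := dist_getVert_le h (Nat.zero_le rj) hrj'
    simpa [hj] using this
  rcases le_total ri rj with hle | hle
  · have hd : G.dist i j ≤ rj - ri := by
      have := dist_getVert_le h hle hrj'
      simpa [hi, hj] using this
    have : min (G.dist k i) (G.dist k j) ≤ ri := le_trans (min_le_left _ _) hki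
    omega
  · have hd : G.dist i j ≤ ri - rj := by
      have := dist_getVert_le h hle hri'
      rw [hi, hj] at this
      simpa [G.dist_comm] using this
    have : min (G.dist k i) (G.dist k j) ≤ rj := le_trans (min_le_right _ _) hkj
    omega
end

section
/- Let h be a Hamiltonian cycle on N vertices with starting vertex k, and let i be any vertex. If arc (i,a) is the r-th arc of h, then d(k,i) ≤ r ≤ N - d(a,k) - 1, where d is graph distance. -/
lemma walk_length_drop {V : Type*} (G : SimpleGraph V) {u v : V} (p : G.Walk u v) (n : ℕ) :
    (p.drop n).length = p.length - n := by
  induction p generalizing n with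
  | nil => simp [SimpleGraph.Walk.drop]
  | cons h q ih =>
    cases n with
    | zero => simp [SimpleGraph.Walk.drop]
    | succ n => simp [SimpleGraph.Walk.drop, ih]

theorem arc_step_bounds
    {V : Type*} [Fintype V] [DecidableEq V]
    (G : SimpleGraph V) (hconn : G.Connected)
    (k : V) (h : G.Walk k k) (hh : h.IsHamiltonianCycle)
    (i a : V) (r : ℕ) (hr : r < h.length)
    (hi : h.getVert r = i) (ha : h.getVert (r + 1) = a) :
    G.dist k i ≤ r ∧ r ≤ Fintype.card V - G.dist a k - 1 := by
  have hlen : h.length = Fintype.card V := hh.length_eq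
  constructor
  · have hgv : h.reverse.getVert (h.length - r) = i := by
      rw [SimpleGraph.Walk.getVert_reverse]
      have : h.length - (h.length - r) = r := by omega
      rw [this, hi]
    have hd : G.dist (h.reverse.getVert (h.length - r)) k ≤
        (h.reverse.drop (h.length - r)).length :=
      SimpleGraph.dist_le _
    have hwl : (h.reverse.drop (h.length - r)).length = r := by
      rw [walk_length_drop, SimpleGraph.Walk.length_reverse]; omega
    rw [hwl] at hd; rw [hgv] at hd
    rw [SimpleGraph.dist_comm]
    exact hd
  · have hd : G.dist (h.getVert (r + 1)) k ≤ (h.drop (r + 1)).length :=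
      SimpleGraph.dist_le _
    have hwl : (h.drop (r + 1)).length = h.length - (r + 1) :=
      walk_length_drop G h (r + 1)
    rw [hwl] at hd; rw [ha] at hd
    omega
end
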